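/- Let A be a Dedekind domain, G a profinite group, and M a discrete A-G-module whose underlying A-module is flat. Then for all integers q ≥ 0 and any flat A-module N, the canonical morphism H^q(G, M) ⊗_A N → H^q(G, M ⊗_A N) is an isomorphism. -/

import Mathlib

/-!
STATEMENT 6.  Let `A` be a Dedekind domain, `G` a profinite group, and `M` a discrete
`A`-`G`-module whose underlying `A`-module is flat.  Then for all integers `q ≥ 0` and
any flat `A`-module `N`, the canonical morphism
`H^q(G, M) ⊗_A N → H^q(G, M ⊗_A N)` is an isomorphism.

Continuous cohomology is computed by the complex of locally constant inhomogeneous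
cochains.  The canonical morphism is induced on cocycles by `z ⊗ c ↦ (x ↦ z(x) ⊗ c)`;
that it is an isomorphism is expressed by: (well-definedness) the image of a continuous
cocycle is a continuous cocycle and the image of a coboundary-tensor is a coboundary,
(surjectivity) every continuous cocycle of `M ⊗ N` is, modulo coboundaries, of this
form, and (injectivity) a tensor of cocycles mapping to a coboundary comes from
`B^q(G,M) ⊗ N` (the cohomology `H^q(G,M) ⊗ N` being the quotient of `Z^q(G,M) ⊗ N` by
the image of `B^q(G,M) ⊗ N`, by right exactness of the tensor product).
-/
set_option linter.unusedSectionVars false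

noncomputable section

section Coh

variable {G : Type*} [Group G] [TopologicalSpace G]
variable {A : Type*} [CommRing A] {M : Type*} [AddCommGroup M] [Module A M]

/-- The differential of the complex of inhomogeneous continuous cochains of the
topological group `G` with values in the `A`-linear representation `ρ`. -/
def dFun (ρ : G →* Module.End A M) (q : ℕ) (f : (Fin q → G) → M) :
    (Fin (q + 1) → G) → M :=
  fun g => ρ (g 0) (f fun i => g i.succ) +
    ∑ j : Fin (q + 1), ((-1 : ℤ) ^ ((j : ℕ) + 1)) • f (Fin.contractNth j (· * ·) g)

theorem dFun_add (ρ : G →* Module.End A M) (q : ℕ) (f g : (Fin q → G) → M) :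
    dFun ρ q (f + g) = dFun ρ q f + dFun ρ q g := by
  funext x
  simp only [dFun, Pi.add_apply, map_add, smul_add, Finset.sum_add_distrib]
  abel

theorem dFun_smul (ρ : G →* Module.End A M) (q : ℕ) (a : A) (f : (Fin q → G) → M) :
    dFun ρ q (a • f) = a • dFun ρ q f := by
  funext x
  simp only [dFun, Pi.smul_apply, map_smul, smul_comm _ a, Finset.smul_sum, smul_add]

theorem dFun_zero (ρ : G →* Module.End A M) (q : ℕ) : dFun (M := M) ρ q 0 = 0 := by
  funext x; simp [dFun]

theorem IsLocallyConstant.add'' {X : Type*} [TopologicalSpace X] {f g : X → M}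
    (hf : IsLocallyConstant f) (hg : IsLocallyConstant g) : IsLocallyConstant (f + g) :=
  (hf.prodMk hg).comp (fun p : M × M => p.1 + p.2)

/-- The `A`-module of continuous (= locally constant) `q`-cocycles. -/
def Zsub (ρ : G →* Module.End A M) (q : ℕ) : Submodule A ((Fin q → G) → M) where
  carrier := {f | IsLocallyConstant f ∧ dFun ρ q f = 0}
  add_mem' := fun hf hg => ⟨hf.1.add'' hg.1, by rw [dFun_add, hf.2, hg.2, add_zero]⟩
  zero_mem' := ⟨IsLocallyConstant.const 0, dFun_zero ρ q⟩
  smul_mem' := fun a f hf => ⟨hf.1.comp (a • ·), by rw [dFun_smul, hf.2, smul_zero]⟩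

/-- The `A`-module of continuous `q`-coboundaries (of continuous cochains). -/
def Bsub (ρ : G →* Module.End A M) : (q : ℕ) → Submodule A ((Fin q → G) → M)
  | 0 => ⊥
  | (q + 1) =>
    { carrier := {F | IsLocallyConstant F ∧ ∃ h, IsLocallyConstant h ∧ dFun ρ q h = F}
      add_mem' := fun {F1 F2} hF1 hF2 =>
        ⟨hF1.1.add'' hF2.1, hF1.2.choose + hF2.2.choose,
          hF1.2.choose_spec.1.add'' hF2.2.choose_spec.1, by
            rw [dFun_add, hF1.2.choose_spec.2, hF2.2.choose_spec.2]⟩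
      zero_mem' := ⟨IsLocallyConstant.const 0, 0, IsLocallyConstant.const 0, dFun_zero ρ q⟩
      smul_mem' := fun a F hF =>
        ⟨hF.1.comp (a • ·), a • hF.2.choose, hF.2.choose_spec.1.comp (a • ·), by
          rw [dFun_smul, hF.2.choose_spec.2]⟩ }

/-- The continuous cohomology `H^q(G, M)` of the topological group `G` with values in
the `A`-linear representation `ρ`, as an `A`-module. -/
abbrev Hmod (ρ : G →* Module.End A M) (q : ℕ) :=
  ↥(Zsub ρ q) ⧸ (Bsub ρ q).comap (Zsub ρ q).subtype

end Coh

open scoped TensorProduct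

section

variable {G : Type*} [Group G] [TopologicalSpace G]
variable {A : Type*} [CommRing A] {M : Type*} [AddCommGroup M] [Module A M]

/-- `f` is the coboundary of a continuous cochain. -/
def IsCoboundary (ρ : G →* Module.End A M) : (q : ℕ) → ((Fin q → G) → M) → Prop
  | 0, f => f = 0
  | (q + 1), f => ∃ h : (Fin q → G) → M, IsLocallyConstant h ∧ dFun ρ q h = f

theorem IsCoboundary.add {ρ : G →* Module.End A M} {q : ℕ} {f g : (Fin q → G) → M}
    (hf : IsCoboundary ρ q f) (hg : IsCoboundary ρ q g) : IsCoboundary ρ q (f + g) := by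
  cases q with
  | zero =>
    simp only [IsCoboundary] at *
    rw [hf, hg, add_zero]
  | succ q =>
    obtain ⟨h1, hl1, hd1⟩ := hf
    obtain ⟨h2, hl2, hd2⟩ := hg
    exact ⟨h1 + h2, hl1.add'' hl2, by rw [dFun_add, hd1, hd2]⟩

theorem IsCoboundary.zero (ρ : G →* Module.End A M) (q : ℕ) :
    IsCoboundary ρ q (0 : (Fin q → G) → M) := by
  cases q with
  | zero => simp only [IsCoboundary]
  | succ q => exact ⟨0, IsLocallyConstant.const 0, dFun_zero ρ q⟩

theorem IsCoboundary.smul {ρ : G →* Module.End A M} {q : ℕ} (a : A) {f : (Fin q → G) → M}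
    (hf : IsCoboundary ρ q f) : IsCoboundary ρ q (a • f) := by
  cases q with
  | zero =>
    simp only [IsCoboundary] at *
    rw [hf, smul_zero]
  | succ q =>
    obtain ⟨h, hl, hd⟩ := hf
    exact ⟨a • h, hl.comp (a • ·), by rw [dFun_smul, hd]⟩

/-- The submodule of `Z^q(G,M)` consisting of continuous coboundaries. -/
def BZ (ρ : G →* Module.End A M) (q : ℕ) : Submodule A ↥(Zsub ρ q) where
  carrier := {z | IsCoboundary ρ q (z : (Fin q → G) → M)}
  add_mem' := fun h1 h2 => h1.add h2
  zero_mem' := IsCoboundary.zero ρ q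
  smul_mem' := fun a z hz => hz.smul a

/-- The action of `G` on `M ⊗[A] N` through the first factor. -/
def rhoT (ρ : G →* Module.End A M) (N : Type*) [AddCommGroup N] [Module A N] :
    G →* Module.End A (M ⊗[A] N) where
  toFun g := (ρ g).rTensor N
  map_one' := by
    show (ρ 1).rTensor N = 1
    rw [map_one, Module.End.one_eq_id, LinearMap.rTensor_id]
    rfl
  map_mul' g h := by
    show (ρ (g * h)).rTensor N = (ρ g).rTensor N * (ρ h).rTensor N
    rw [map_mul, Module.End.mul_eq_comp, LinearMap.rTensor_comp, ← Module.End.mul_eq_comp]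

end

/-! ### Auxiliary development -/

section AuxLC

open scoped Classical

theorem isLocallyConstant_pi' {X : Type*} [TopologicalSpace X] {ι : Type*} [Finite ι]
    {Y : ι → Type*} {f : ∀ i, X → Y i} (h : ∀ i, IsLocallyConstant (f i)) :
    IsLocallyConstant (fun x i => f i x) := by
  rw [IsLocallyConstant.iff_exists_open]
  intro x
  choose U hUo hxU hU using fun i => (IsLocallyConstant.iff_exists_open _).1 (h i) x
  exact ⟨⋂ i, U i, isOpen_iInter_of_finite hUo, Set.mem_iInter.2 hxU,
    fun y hy => funext fun i => hU i y (Set.mem_iInter.1 hy i)⟩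

variable {A : Type*} [CommRing A]
variable {M : Type*} [AddCommGroup M] [Module A M]
variable {N : Type*} [AddCommGroup N] [Module A N]

/-- The submodule of locally constant functions. -/
def Lsub (A : Type*) [CommRing A] (X : Type*) [TopologicalSpace X] (M : Type*)
    [AddCommGroup M] [Module A M] : Submodule A (X → M) where
  carrier := {f | IsLocallyConstant f}
  add_mem' := fun hf hg => hf.add'' hg
  zero_mem' := IsLocallyConstant.const 0
  smul_mem' := fun a f hf => hf.comp (a • ·)

variable {X : Type*} [TopologicalSpace X]

/-- The canonical bilinear map. -/
def thetaBil : ↥(Lsub A X M) →ₗ[A] N →ₗ[A] (X → M ⊗[A] N) where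
  toFun f :=
    { toFun := fun c x => (f : X → M) x ⊗ₜ[A] c
      map_add' := fun c c' => funext fun x => TensorProduct.tmul_add _ _ _
      map_smul' := fun a c => funext fun x => by
        simp [TensorProduct.tmul_smul] }
  map_add' := fun f g => by
    ext c x
    exact TensorProduct.add_tmul _ _ _
  map_smul' := fun a f => by
    ext c x
    simp [TensorProduct.smul_tmul']

/-- The canonical map `LC(X,M) ⊗ N → LC(X, M ⊗ N)` (valued in all functions). -/
def theta : (↥(Lsub A X M) ⊗[A] N) →ₗ[A] (X → M ⊗[A] N) :=
  TensorProduct.lift thetaBil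

@[simp] theorem theta_tmul (f : ↥(Lsub A X M)) (c : N) (x : X) :
    theta (f ⊗ₜ[A] c) x = (f : X → M) x ⊗ₜ[A] c := rfl

theorem theta_eq_zero [CompactSpace X] (t : ↥(Lsub A X M) ⊗[A] N)
    (ht : theta t = 0) : t = 0 := by
  obtain ⟨S, hS⟩ := TensorProduct.exists_finset t
  set Φ : X → ({x // x ∈ S} → M) :=
    fun x p => ((p : (↥(Lsub A X M) × N)).1 : X → M) x with hΦdef
  have hΦ : IsLocallyConstant Φ := isLocallyConstant_pi' fun p => p.1.1.2
  have elc : ∀ (v : {x // x ∈ S} → M) (m : M),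
      IsLocallyConstant (fun x => if Φ x = v then m else 0) :=
    fun v m => hΦ.comp (fun w => if w = v then m else 0)
  set E : ({x // x ∈ S} → M) → (M →ₗ[A] ↥(Lsub A X M)) := fun v =>
    { toFun := fun m => ⟨fun x => if Φ x = v then m else 0, elc v m⟩
      map_add' := fun m m' => Subtype.ext (funext fun x => by
        by_cases h : Φ x = v <;> simp [h])
      map_smul' := fun a m => Subtype.ext (funext fun x => by
        by_cases h : Φ x = v <;> simp [h]) } with hE
  have hR := hΦ.range_finite
  have hrep : ∀ p : {x // x ∈ S},
      (p : ↥(Lsub A X M) × N).1 = ∑ v ∈ hR.toFinset, E v (v p) := by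
    intro p
    apply Subtype.ext
    funext x
    have hx : Φ x ∈ hR.toFinset := hR.mem_toFinset.2 ⟨x, rfl⟩
    have h1 : (((∑ v ∈ hR.toFinset, E v (v p) : ↥(Lsub A X M))) : X → M) x
        = ∑ v ∈ hR.toFinset, (if Φ x = v then v p else 0) := by
      rw [AddSubmonoidClass.coe_finset_sum, Finset.sum_apply]
      rfl
    rw [h1, Finset.sum_ite_eq, if_pos hx]
  have hval : ∀ v ∈ hR.toFinset,
      (∑ p ∈ S.attach, (v p) ⊗ₜ[A] ((p : (↥(Lsub A X M) × N)).2) : M ⊗[A] N) = 0 := by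
    intro v hv
    obtain ⟨x, hx⟩ := hR.mem_toFinset.1 hv
    have h1 : theta t x = 0 := by rw [ht]; rfl
    rw [hS, ← Finset.sum_attach S (fun p => p.1 ⊗ₜ[A] p.2), map_sum] at h1
    rw [Finset.sum_apply] at h1
    calc (∑ p ∈ S.attach, (v p) ⊗ₜ[A] ((p : (↥(Lsub A X M) × N)).2) : M ⊗[A] N)
        = ∑ p ∈ S.attach, theta ((p : (↥(Lsub A X M) × N)).1 ⊗ₜ[A]
            (p : (↥(Lsub A X M) × N)).2) x := by
          refine Finset.sum_congr rfl fun p _ => ?_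
          rw [theta_tmul]
          congr 1
          rw [← hx]
      _ = 0 := h1
  have ht2 : t = ∑ v ∈ hR.toFinset, (LinearMap.rTensor N (E v))
      (∑ p ∈ S.attach, (v p) ⊗ₜ[A] ((p : (↥(Lsub A X M) × N)).2)) := by
    have : ∀ v, (LinearMap.rTensor N (E v))
        (∑ p ∈ S.attach, (v p) ⊗ₜ[A] ((p : (↥(Lsub A X M) × N)).2))
        = ∑ p ∈ S.attach, (E v (v p)) ⊗ₜ[A] ((p : (↥(Lsub A X M) × N)).2) := by
      intro v
      rw [map_sum]
      exact Finset.sum_congr rfl fun p _ => LinearMap.rTensor_tmul _ _ _ _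
    simp_rw [this]
    rw [Finset.sum_comm]
    calc t = ∑ p ∈ S.attach, (p : (↥(Lsub A X M) × N)).1 ⊗ₜ[A]
        (p : (↥(Lsub A X M) × N)).2 := by
          rw [hS, ← Finset.sum_attach S (fun p => p.1 ⊗ₜ[A] p.2)]
      _ = ∑ p ∈ S.attach, ∑ v ∈ hR.toFinset,
            (E v (v p)) ⊗ₜ[A] ((p : (↥(Lsub A X M) × N)).2) := by
          refine Finset.sum_congr rfl fun p _ => ?_
          rw [hrep p, TensorProduct.sum_tmul]
  rw [ht2]
  rw [Finset.sum_congr rfl (fun v hv => by rw [hval v hv, map_zero])]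
  exact Finset.sum_const_zero

theorem theta_injective [CompactSpace X] :
    Function.Injective (theta (A := A) (X := X) (M := M) (N := N)) := by
  intro t t' h
  have : theta (t - t') = 0 := by rw [map_sub, h, sub_self]
  exact sub_eq_zero.1 (theta_eq_zero _ this)

theorem theta_surjective [CompactSpace X] (F : X → M ⊗[A] N)
    (hF : IsLocallyConstant F) : ∃ t, theta (A := A) (X := X) (M := M) (N := N) t = F := by
  have hR := hF.range_finite
  choose Sw hSw using fun w : M ⊗[A] N => TensorProduct.exists_finset (R := A) w
  refine ⟨∑ w ∈ hR.toFinset, ∑ p ∈ Sw w,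
    (⟨fun x => if F x = w then p.1 else 0,
      hF.comp (fun u => if u = w then p.1 else 0)⟩ : ↥(Lsub A X M)) ⊗ₜ[A] p.2, ?_⟩
  funext x
  have hx : F x ∈ hR.toFinset := hR.mem_toFinset.2 ⟨x, rfl⟩
  rw [map_sum, Finset.sum_apply]
  have hw : ∀ w, theta (∑ p ∈ Sw w,
      (⟨fun x => if F x = w then p.1 else 0,
        hF.comp (fun u => if u = w then p.1 else 0)⟩ : ↥(Lsub A X M)) ⊗ₜ[A] p.2) x
      = if F x = w then w else 0 := by
    intro w
    rw [map_sum, Finset.sum_apply]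
    by_cases h : F x = w
    · simp only [theta_tmul, h, if_pos rfl, if_true]
      exact (hSw w).symm
    · simp [theta_tmul, h]
  rw [Finset.sum_congr rfl fun w _ => hw w, Finset.sum_ite_eq, if_pos hx]

end AuxLC

section AuxD

variable {G : Type*} [Group G] [TopologicalSpace G]
variable {A : Type*} [CommRing A]
variable {M : Type*} [AddCommGroup M] [Module A M]
variable {N : Type*} [AddCommGroup N] [Module A N]

theorem isLocallyConstant_rho_apply [IsTopologicalGroup G] (ρ : G →* Module.End A M)
    (hdisc : ∀ m : M, IsOpen {g : G | ρ g m = m}) {X : Type*} [TopologicalSpace X]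
    {k : X → G} (hk : Continuous k) {h : X → M} (hh : IsLocallyConstant h) :
    IsLocallyConstant fun x => ρ (k x) (h x) := by
  rw [IsLocallyConstant.iff_exists_open]
  intro x₀
  obtain ⟨U, hUo, hxU, hUc⟩ := (IsLocallyConstant.iff_exists_open _).1 hh x₀
  set m := h x₀ with hm
  have hVo : IsOpen {g : G | ρ g m = ρ (k x₀) m} := by
    have hset : {g : G | ρ g m = ρ (k x₀) m} =
        (fun g => (k x₀)⁻¹ * g) ⁻¹' {g : G | ρ g m = m} := by
      ext g
      simp only [Set.mem_setOf_eq, Set.mem_preimage]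
      constructor
      · intro hg
        have h1 : ρ ((k x₀)⁻¹ * g) m = ρ ((k x₀)⁻¹) (ρ g m) := by
          rw [map_mul]; rfl
        rw [h1, hg, ← Module.End.mul_apply, ← map_mul, inv_mul_cancel, map_one,
          Module.End.one_apply]
      · intro hg
        have h1 : ρ g m = ρ (k x₀) (ρ ((k x₀)⁻¹ * g) m) := by
          rw [← Module.End.mul_apply, ← map_mul, mul_inv_cancel_left]
        rw [h1, hg]
    rw [hset]
    exact (hdisc m).preimage (continuous_const.mul continuous_id)
  refine ⟨U ∩ k ⁻¹' {g | ρ g m = ρ (k x₀) m}, hUo.inter (hVo.preimage hk),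
    ⟨hxU, by simp⟩, ?_⟩
  rintro y ⟨hyU, hyV⟩
  show ρ (k y) (h y) = ρ (k x₀) (h x₀)
  rw [hUc y hyU, ← hm]
  exact hyV

theorem isLocallyConstant_dFun [IsTopologicalGroup G] (ρ : G →* Module.End A M)
    (hdisc : ∀ m : M, IsOpen {g : G | ρ g m = m}) (q : ℕ) {f : (Fin q → G) → M}
    (hf : IsLocallyConstant f) : IsLocallyConstant (dFun ρ q f) := by
  have h0 : IsLocallyConstant fun g : Fin (q+1) → G => ρ (g 0) (f fun i => g i.succ) :=
    isLocallyConstant_rho_apply ρ hdisc (continuous_apply 0)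
      (hf.comp_continuous (continuous_pi fun i => continuous_apply i.succ))
  have hterm : ∀ j : Fin (q+1), IsLocallyConstant fun g : Fin (q+1) → G =>
      ((-1 : ℤ) ^ ((j : ℕ) + 1)) • f (Fin.contractNth j (· * ·) g) := by
    intro j
    have hc : Continuous fun g : Fin (q+1) → G => Fin.contractNth j (· * ·) g := by
      refine continuous_pi fun i => ?_
      unfold Fin.contractNth
      split_ifs
      · exact continuous_apply _
      · exact (continuous_apply _).mul (continuous_apply _)
      · exact continuous_apply _
    exact (hf.comp_continuous hc).comp (((-1 : ℤ) ^ ((j : ℕ) + 1)) • ·)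
  have hsum : IsLocallyConstant fun g : Fin (q+1) → G =>
      ∑ j : Fin (q+1), ((-1 : ℤ) ^ ((j : ℕ) + 1)) • f (Fin.contractNth j (· * ·) g) :=
    (isLocallyConstant_pi' fun j => hterm j).comp fun v => ∑ j, v j
  exact h0.add'' hsum

/-- `dFun` as a linear map. -/
def dLin (ρ : G →* Module.End A M) (q : ℕ) :
    ((Fin q → G) → M) →ₗ[A] ((Fin (q+1) → G) → M) where
  toFun := dFun ρ q
  map_add' := dFun_add ρ q
  map_smul' := dFun_smul ρ q

/-- `dFun` restricted to locally constant functions. -/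
def dLC [IsTopologicalGroup G] (ρ : G →* Module.End A M)
    (hdisc : ∀ m : M, IsOpen {g : G | ρ g m = m}) (q : ℕ) :
    ↥(Lsub A (Fin q → G) M) →ₗ[A] ↥(Lsub A (Fin (q+1) → G) M) :=
  LinearMap.codRestrict _ ((dLin ρ q).comp (Lsub A (Fin q → G) M).subtype)
    (fun f => isLocallyConstant_dFun ρ hdisc q f.2)

@[simp] theorem dLC_coe [IsTopologicalGroup G] (ρ : G →* Module.End A M)
    (hdisc : ∀ m : M, IsOpen {g : G | ρ g m = m}) (q : ℕ)
    (f : ↥(Lsub A (Fin q → G) M)) :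
    ((dLC ρ hdisc q f : ↥(Lsub A (Fin (q+1) → G) M)) : (Fin (q+1) → G) → M)
      = dFun ρ q (f : (Fin q → G) → M) := rfl

theorem dFun_tmul (ρ : G →* Module.End A M) (q : ℕ) (f : (Fin q → G) → M) (c : N) :
    dFun (rhoT ρ N) q (fun y => f y ⊗ₜ[A] c) = fun x => (dFun ρ q f x) ⊗ₜ[A] c := by
  funext x
  have key : ∀ m : M, m ⊗ₜ[A] c = ((TensorProduct.mk A M N).flip c) m := fun _ => rfl
  simp only [dFun, key, map_add, map_sum, map_zsmul]
  congr 1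

theorem theta_dL [IsTopologicalGroup G] (ρ : G →* Module.End A M)
    (hdisc : ∀ m : M, IsOpen {g : G | ρ g m = m}) (q : ℕ)
    (t : ↥(Lsub A (Fin q → G) M) ⊗[A] N) :
    theta (LinearMap.rTensor N (dLC ρ hdisc q) t)
      = dFun (rhoT ρ N) q (theta t) := by
  have hmaps : (theta (A := A) (X := Fin (q+1) → G) (M := M) (N := N)).comp
      (LinearMap.rTensor N (dLC ρ hdisc q))
      = (dLin (rhoT ρ N) q).comp (theta (A := A) (X := Fin q → G) (M := M) (N := N)) := by
    apply TensorProduct.ext'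
    intro f c
    simp only [LinearMap.comp_apply, LinearMap.rTensor_tmul]
    funext x
    show theta ((dLC ρ hdisc q f) ⊗ₜ[A] c) x = dFun (rhoT ρ N) q (theta (f ⊗ₜ[A] c)) x
    rw [theta_tmul, dLC_coe]
    have : theta (f ⊗ₜ[A] c) = fun y => (f : (Fin q → G) → M) y ⊗ₜ[A] c := rfl
    rw [this, dFun_tmul]
  exact LinearMap.ext_iff.1 hmaps t

end AuxD

section DSquared

universe v

variable {k G V : Type v} [CommRing k] [Group G] [AddCommGroup V] [Module k V]

theorem dFun_eq_d (ρ : Representation k G V) (n : ℕ) (f : (Fin n → G) → V) :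
    dFun (A := k) (M := V) ρ n f = (inhomogeneousCochains.d (Rep.of ρ) n).hom f := by
  have hd : (inhomogeneousCochains.d (Rep.of ρ) n).hom f = fun g =>
      ρ (g 0) (f fun i => g i.succ) +
      ∑ j : Fin (n + 1), (-1 : k) ^ ((j : ℕ) + 1) • f (Fin.contractNth j (· * ·) g) := by
    funext g
    simp only [inhomogeneousCochains.d_hom_apply]
  rw [hd]
  funext g
  show ρ (g 0) (f fun i => g i.succ) +
      ∑ j : Fin (n + 1), ((-1 : ℤ) ^ ((j : ℕ) + 1)) • f (Fin.contractNth j (· * ·) g) = _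
  congr 1
  refine Finset.sum_congr rfl fun j _ => ?_
  rw [← Int.cast_smul_eq_zsmul k]
  push_cast
  rfl

theorem dFun_dFun_rep (ρ : Representation k G V) (n : ℕ) (f : (Fin n → G) → V) :
    dFun (A := k) (M := V) ρ (n+1) (dFun (A := k) (M := V) ρ n f) = 0 := by
  have h := groupCohomology.inhomogeneousCochains.d_comp_d (A := Rep.of ρ) (n := n)
  have h2 := LinearMap.ext_iff.1 (congrArg ModuleCat.Hom.hom h) f
  rw [dFun_eq_d, dFun_eq_d]
  exact h2

end DSquared

section Transfer

universe uA uG uM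

variable {G : Type uG} [Group G] {A : Type uA} [CommRing A]
variable {M : Type uM} [AddCommGroup M] [Module A M]

/-- Transport of a representation to `ULift`s. -/
def rhoUp (ρ : G →* Module.End A M) :
    Representation (ULift.{max uG uM} A) (ULift.{max uA uM} G) (ULift.{max uA uG} M) where
  toFun g :=
    { toFun := fun m => ⟨ρ g.down m.down⟩
      map_add' := fun m m' => congrArg ULift.up (map_add (ρ g.down) m.down m'.down)
      map_smul' := fun a m => congrArg ULift.up (map_smul (ρ g.down) a.down m.down) }
  map_one' := by
    ext m
    show ρ 1 m.down = m.down
    rw [map_one]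
    rfl
  map_mul' := fun g h => by
    ext m
    show ρ (g.down * h.down) m.down = ρ g.down (ρ h.down m.down)
    rw [map_mul]
    rfl

theorem contractNth_down {w : Type*} [Mul w] (n : ℕ) (j : Fin (n+1))
    (y : Fin (n+1) → ULift w) (i : Fin n) :
    (Fin.contractNth j (· * ·) y i).down
      = Fin.contractNth j (· * ·) (fun i => (y i).down) i := by
  unfold Fin.contractNth
  split_ifs <;> rfl

theorem dFun_up (ρ : G →* Module.End A M) (n : ℕ) (h : (Fin n → G) → M) :
    dFun (rhoUp ρ) n (fun x => ⟨h fun i => (x i).down⟩) =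
      fun x => ⟨dFun ρ n h fun i => (x i).down⟩ := by
  funext x
  set e : ULift.{max uA uG} M ≃+ M := AddEquiv.ulift with he
  have h1 : dFun (rhoUp ρ) n (fun x => (⟨h fun i => (x i).down⟩ : ULift M)) x
      = rhoUp ρ (x 0) ⟨h fun i => (x i.succ).down⟩ +
        ∑ j : Fin (n+1), ((-1 : ℤ) ^ ((j : ℕ) + 1)) •
          (⟨h fun i => ((Fin.contractNth j (· * ·) x) i).down⟩ : ULift M) := rfl
  apply e.injective
  rw [h1]
  rw [map_add, map_sum]
  have h2 : e (rhoUp ρ (x 0) ⟨h fun i => (x i.succ).down⟩)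
      = ρ ((x 0).down) (h fun i => (x i.succ).down) := rfl
  rw [h2]
  have h3 : ∀ j : Fin (n+1), e (((-1 : ℤ) ^ ((j : ℕ) + 1)) •
        (⟨h fun i => ((Fin.contractNth j (· * ·) x) i).down⟩ : ULift M))
      = ((-1 : ℤ) ^ ((j : ℕ) + 1)) •
        h (Fin.contractNth j (· * ·) (fun i => (x i).down)) := by
    intro j
    rw [map_zsmul]
    congr 1
    show h _ = h _
    congr 1
    funext i
    exact contractNth_down n j x i
  rw [Finset.sum_congr rfl fun j _ => h3 j]
  rfl

theorem dFun_dFun (ρ : G →* Module.End A M) (q : ℕ) (f : (Fin q → G) → M) :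
    dFun ρ (q+1) (dFun ρ q f) = 0 := by
  funext y
  have key := dFun_dFun_rep (rhoUp ρ) q (fun x => ⟨f fun i => (x i).down⟩)
  rw [dFun_up, dFun_up] at key
  have := congrFun key (fun i => ⟨y i⟩)
  have h2 : (⟨dFun ρ (q+1) (dFun ρ q f) y⟩ : ULift.{max uA uG} M) = 0 := by
    convert this using 2
    rfl
  have := congrArg ULift.down h2
  exact this

end Transfer

set_option maxHeartbeats 1000000
set_option synthInstance.maxHeartbeats 400000

theorem statement6
    (A : Type*) [CommRing A] [IsDedekindDomain A]
    -- `G` : a profinite group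
    (G : Type*) [Group G] [TopologicalSpace G] [IsTopologicalGroup G]
    [CompactSpace G] [T2Space G] [TotallyDisconnectedSpace G]
    -- `M` : a discrete `A`-`G`-module whose underlying `A`-module is flat
    (M : Type*) [AddCommGroup M] [Module A M] [Module.Flat A M]
    (ρ : G →* Module.End A M)
    (hdisc : ∀ m : M, IsOpen {g : G | ρ g m = m})
    -- `N` : a flat `A`-module
    (N : Type*) [AddCommGroup N] [Module A N] [Module.Flat A N]
    (q : ℕ) :
    -- well-definedness : cocycle-tensors are sent to continuous cocycles ...
    (∀ (z : ↥(Zsub ρ q)) (c : N),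
      (fun x => ((z : (Fin q → G) → M) x) ⊗ₜ[A] c) ∈ Zsub (rhoT ρ N) q) ∧
    -- ... and coboundary-tensors to coboundaries
    (∀ (b : ↥(BZ ρ q)) (c : N),
      IsCoboundary (rhoT ρ N) q
        (fun x => (((b : ↥(Zsub ρ q)) : (Fin q → G) → M) x) ⊗ₜ[A] c)) ∧
    -- surjectivity modulo coboundaries
    (∀ F : (Fin q → G) → (M ⊗[A] N), IsLocallyConstant F → dFun (rhoT ρ N) q F = 0 →
      ∃ (k : ℕ) (z : Fin k → ↥(Zsub ρ q)) (c : Fin k → N),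
        IsCoboundary (rhoT ρ N) q
          (F - fun x => ∑ j, ((z j : (Fin q → G) → M) x) ⊗ₜ[A] c j)) ∧
    -- injectivity
    (∀ (k : ℕ) (z : Fin k → ↥(Zsub ρ q)) (c : Fin k → N),
      IsCoboundary (rhoT ρ N) q
        (fun x => ∑ j, ((z j : (Fin q → G) → M) x) ⊗ₜ[A] c j) →
      (∑ j, (z j) ⊗ₜ[A] (c j)) ∈
        LinearMap.range (TensorProduct.map (Submodule.subtype (BZ ρ q))
          (LinearMap.id (M := N)))) := by
  have hZL : Zsub ρ q ≤ Lsub A (Fin q → G) M := fun f hf => hf.1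
  refine ⟨?_, ?_, ?_, ?_⟩
  · -- cocycle-tensors are continuous cocycles
    intro z c
    refine ⟨z.2.1.comp (· ⊗ₜ[A] c), ?_⟩
    rw [dFun_tmul ρ q _ c]
    funext x
    rw [show dFun ρ q (z : (Fin q → G) → M) = 0 from z.2.2]
    simp
  · -- coboundary-tensors are coboundaries
    intro b c
    obtain ⟨zb, hzb⟩ := b
    cases q with
    | zero =>
      show (fun x => ((zb : ↥(Zsub ρ 0)) : (Fin 0 → G) → M) x ⊗ₜ[A] c) = 0
      have h0 : ((zb : ↥(Zsub ρ 0)) : (Fin 0 → G) → M) = 0 := hzb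
      funext x
      rw [h0]
      simp
    | succ q' =>
      obtain ⟨h, hl, hd⟩ := hzb
      refine ⟨fun x => h x ⊗ₜ[A] c, hl.comp (· ⊗ₜ[A] c), ?_⟩
      rw [dFun_tmul]
      funext x
      exact congrArg (· ⊗ₜ[A] c) (congrFun hd x)
  · -- surjectivity modulo coboundaries
    intro F hF hdF
    obtain ⟨t, ht⟩ := theta_surjective F hF
    have h1 : LinearMap.rTensor N (dLC ρ hdisc q) t = 0 := by
      apply theta_eq_zero
      rw [theta_dL ρ hdisc q t, ht, hdF]
    have hex : Function.Exact ((LinearMap.ker (dLC ρ hdisc q)).subtype)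
        (dLC ρ hdisc q) := LinearMap.exact_subtype_ker_map _
    have hex2 : Function.Exact
        (LinearMap.rTensor N (LinearMap.ker (dLC ρ hdisc q)).subtype)
        (LinearMap.rTensor N (dLC ρ hdisc q)) :=
      Module.Flat.rTensor_exact (R := A) (M := N)
        (N := ↥(LinearMap.ker (dLC ρ hdisc q))) (N' := ↥(Lsub A (Fin q → G) M))
        (N'' := ↥(Lsub A (Fin (q+1) → G) M)) hex
    obtain ⟨u, hu⟩ := (hex2 t).1 h1
    obtain ⟨T, hT⟩ := TensorProduct.exists_finset u
    let zOf : {x // x ∈ T} → ↥(Zsub ρ q) := fun p =>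
      ⟨((p.1.1 : ↥(Lsub A (Fin q → G) M)) : (Fin q → G) → M),
        (p.1.1 : ↥(Lsub A (Fin q → G) M)).2, by
          have h := p.1.1.2
          rw [LinearMap.mem_ker] at h
          have h2 := congrArg Subtype.val h
          rw [dLC_coe] at h2
          exact h2⟩
    refine ⟨T.card, fun i => zOf (T.equivFin.symm i),
      fun i => ((T.equivFin.symm i : (↥(LinearMap.ker (dLC ρ hdisc q)) × N))).2, ?_⟩
    have hF0 : F = fun x => ∑ j : Fin T.card,
        ((zOf (T.equivFin.symm j) : ↥(Zsub ρ q)) : (Fin q → G) → M) x ⊗ₜ[A]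
          ((T.equivFin.symm j : (↥(LinearMap.ker (dLC ρ hdisc q)) × N))).2 := by
      funext x
      rw [← ht, ← hu, hT]
      rw [map_sum, map_sum, Finset.sum_apply]
      rw [show (∑ j : Fin T.card,
          ((zOf (T.equivFin.symm j) : ↥(Zsub ρ q)) : (Fin q → G) → M) x ⊗ₜ[A]
            ((T.equivFin.symm j : (↥(LinearMap.ker (dLC ρ hdisc q)) × N))).2)
          = ∑ p : {x // x ∈ T},
          ((zOf p : ↥(Zsub ρ q)) : (Fin q → G) → M) x ⊗ₜ[A]
            ((p : (↥(LinearMap.ker (dLC ρ hdisc q)) × N))).2 from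
        Equiv.sum_comp T.equivFin.symm (fun p : {x // x ∈ T} =>
          ((zOf p : ↥(Zsub ρ q)) : (Fin q → G) → M) x ⊗ₜ[A]
            ((p : (↥(LinearMap.ker (dLC ρ hdisc q)) × N))).2)]
      rw [← Finset.sum_coe_sort T (fun p =>
        theta (LinearMap.rTensor N (LinearMap.ker (dLC ρ hdisc q)).subtype
          (p.1 ⊗ₜ[A] p.2)) x)]
      refine Finset.sum_congr rfl fun p _ => ?_
      rw [LinearMap.rTensor_tmul, theta_tmul]
      rfl
    have heq : (F - fun x => ∑ j : Fin T.card,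
        ((zOf (T.equivFin.symm j) : ↥(Zsub ρ q)) : (Fin q → G) → M) x ⊗ₜ[A]
          ((T.equivFin.symm j : (↥(LinearMap.ker (dLC ρ hdisc q)) × N))).2) = 0 := by
      rw [hF0]
      exact sub_self _
    rw [heq]
    exact IsCoboundary.zero _ _
  · -- injectivity
    intro k z c hcob
    have hθ : theta (LinearMap.rTensor N (Submodule.inclusion hZL) (∑ j, z j ⊗ₜ[A] c j))
        = fun x => ∑ j, ((z j : (Fin q → G) → M)) x ⊗ₜ[A] c j := by
      funext x
      rw [map_sum, map_sum, Finset.sum_apply]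
      refine Finset.sum_congr rfl fun j _ => ?_
      rw [LinearMap.rTensor_tmul, theta_tmul]
      rfl
    have hinj : Function.Injective
        (LinearMap.rTensor N (Submodule.inclusion hZL)) :=
      Module.Flat.rTensor_preserves_injective_linearMap _
        (Submodule.inclusion_injective hZL)
    cases q with
    | zero =>
      have hc0 : (fun x => ∑ j, ((z j : (Fin 0 → G) → M)) x ⊗ₜ[A] c j)
          = (0 : (Fin 0 → G) → M ⊗[A] N) := hcob
      have h2 : LinearMap.rTensor N (Submodule.inclusion hZL) (∑ j, z j ⊗ₜ[A] c j) = 0 := by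
        apply theta_eq_zero
        rw [hθ, hc0]
      have h3 : (∑ j, z j ⊗ₜ[A] c j) = 0 := hinj (by rw [h2, map_zero])
      rw [h3]
      exact zero_mem _
    | succ q' =>
      obtain ⟨h, hl, hd⟩ := hcob
      obtain ⟨u, hu⟩ := theta_surjective h hl
      have h1 : theta (LinearMap.rTensor N (dLC ρ hdisc q') u)
          = theta (LinearMap.rTensor N (Submodule.inclusion hZL) (∑ j, z j ⊗ₜ[A] c j)) := by
        rw [theta_dL ρ hdisc q' u, hu, hd, hθ]
      have h2 := theta_injective h1
      let dB : ↥(Lsub A (Fin q' → G) M) →ₗ[A] ↥(BZ ρ (q' + 1)) :=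
        { toFun := fun f =>
            ⟨⟨dFun ρ q' (f : (Fin q' → G) → M),
              isLocallyConstant_dFun ρ hdisc q' f.2,
              dFun_dFun ρ q' (f : (Fin q' → G) → M)⟩,
             ⟨(f : (Fin q' → G) → M), f.2, rfl⟩⟩
          map_add' := fun f g => Subtype.ext (Subtype.ext (by
            simp only [Submodule.coe_add]
            exact dFun_add ρ q' _ _))
          map_smul' := fun a f => Subtype.ext (Subtype.ext (by
            simp only [Submodule.coe_smul]
            exact dFun_smul ρ q' a _)) }
      have hfac : ((Submodule.inclusion hZL).comp
          ((BZ ρ (q' + 1)).subtype)).comp dB = dLC ρ hdisc q' :=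
        LinearMap.ext fun f => Subtype.ext rfl
      have h3 : LinearMap.rTensor N (Submodule.inclusion hZL)
          (LinearMap.rTensor N ((BZ ρ (q' + 1)).subtype)
            (LinearMap.rTensor N dB u))
          = LinearMap.rTensor N (Submodule.inclusion hZL) (∑ j, z j ⊗ₜ[A] c j) := by
        rw [← h2, ← hfac, LinearMap.rTensor_comp, LinearMap.rTensor_comp]
        rfl
      have h4 := hinj h3
      exact ⟨LinearMap.rTensor N dB u, h4⟩
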